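/- Let n ≥ 1 be an integer, λ ≥ 0 a real number, p ∈ [0,1], set q = (1−p)ⁿ, and let C₀ = inf_{0<x<1/2} 2/(x·(1−x)·log(1/x)). Then q·exp(λ·(p·q − p)) + (1−q)·exp(λ·p·q) ≤ exp( p·λ²/(C₀·n) ). -/

import Mathlib

set_option maxHeartbeats 1000000

open Real Set

lemma kearns_key (q c : ℝ) (hq0 : 0 ≤ q) (hq1 : q ≤ 1)
    (hc : ∀ u : ℝ, 0 ≤ u → u ≤ q → u * (1 - u) ≤ c)
    (t : ℝ) (ht : 0 ≤ t) :
    q * Real.exp (t * (q - 1)) + (1 - q) * Real.exp (t * q)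
      ≤ Real.exp (c * t ^ 2 / 2) := by
  have hD : ∀ s : ℝ, 0 < q * Real.exp (-s) + (1 - q) := by
    intro s
    rcases eq_or_lt_of_le hq0 with h | h
    · simp [← h]
    · have := Real.exp_pos (-s); nlinarith
  have hDd : ∀ s : ℝ, HasDerivAt (fun s => q * Real.exp (-s) + (1 - q))
      (-(q * Real.exp (-s))) s := by
    intro s
    have h1 : HasDerivAt (fun s : ℝ => -s) (-1) s := (hasDerivAt_id s).neg
    have h3 := (h1.exp.const_mul q).add_const (1 - q)
    exact h3.congr_deriv (by ring)
  -- derivative facts for ψ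
  have hψd : ∀ s : ℝ, HasDerivAt
      (fun s => q - q * Real.exp (-s) / (q * Real.exp (-s) + (1 - q)) - c * s)
      ((q * Real.exp (-s) * (q * Real.exp (-s) + (1 - q)) - (q * Real.exp (-s))^2)
        / (q * Real.exp (-s) + (1 - q))^2 - c) s := by
    intro s
    have h1 : HasDerivAt (fun s : ℝ => -s) (-1) s := (hasDerivAt_id s).neg
    have hN : HasDerivAt (fun s => q * Real.exp (-s)) (-(q * Real.exp (-s))) s := by
      have := h1.exp.const_mul q
      exact this.congr_deriv (by ring)
    have hdiv := hN.div (hDd s) (hD s).ne'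
    have hlin : HasDerivAt (fun s : ℝ => c * s) c s := by
      simpa using (hasDerivAt_id s).const_mul c
    have := ((hasDerivAt_const s q).sub hdiv).sub hlin
    exact this.congr_deriv (by ring)
  -- ψ deriv nonpos on s ≥ 0
  have hψderiv_nonpos : ∀ s : ℝ, 0 ≤ s →
      (q * Real.exp (-s) * (q * Real.exp (-s) + (1 - q)) - (q * Real.exp (-s))^2)
        / (q * Real.exp (-s) + (1 - q))^2 - c ≤ 0 := by
    intro s hs
    set N := q * Real.exp (-s) with hNdef
    set D := q * Real.exp (-s) + (1 - q) with hDdef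
    have hDpos : 0 < D := hD s
    have hN0 : 0 ≤ N := mul_nonneg hq0 (Real.exp_pos _).le
    have hNq : N ≤ q := by
      have : Real.exp (-s) ≤ 1 := Real.exp_le_one_iff.2 (by linarith)
      nlinarith
    set u := N / D with hudef
    have hu0 : 0 ≤ u := div_nonneg hN0 hDpos.le
    have huq : u ≤ q := by
      rw [hudef, div_le_iff₀ hDpos]
      nlinarith
    have hcu := hc u hu0 huq
    have heq : (N * D - N^2) / D^2 = u * (1 - u) := by
      rw [hudef]
      field_simp
    rw [heq]
    linarith
  have hψ0 : (fun s => q - q * Real.exp (-s) / (q * Real.exp (-s) + (1 - q)) - c * s) 0 = 0 := by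
    norm_num
  have hψmono : AntitoneOn
      (fun s => q - q * Real.exp (-s) / (q * Real.exp (-s) + (1 - q)) - c * s)
      (Set.Ici 0) := by
    apply antitoneOn_of_deriv_nonpos (convex_Ici 0)
    · exact fun s _ => (hψd s).continuousAt.continuousWithinAt
    · exact fun s _ => (hψd s).differentiableAt.differentiableWithinAt
    · intro s hs
      rw [interior_Ici] at hs
      rw [(hψd s).deriv]
      exact hψderiv_nonpos s (le_of_lt hs)
  have hψle : ∀ s : ℝ, 0 ≤ s →
      q - q * Real.exp (-s) / (q * Real.exp (-s) + (1 - q)) - c * s ≤ 0 := by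
    intro s hs
    have := hψmono (self_mem_Ici) (mem_Ici.2 hs) hs
    rw [hψ0] at this
    exact this
  -- φ
  have hφd : ∀ s : ℝ, HasDerivAt
      (fun s => Real.log (q * Real.exp (-s) + (1 - q)) + q * s - c * s ^ 2 / 2)
      (q - q * Real.exp (-s) / (q * Real.exp (-s) + (1 - q)) - c * s) s := by
    intro s
    have hlog := (hDd s).log (hD s).ne'
    have hlin : HasDerivAt (fun s : ℝ => q * s) q s := by
      simpa using (hasDerivAt_id s).const_mul q
    have hsq : HasDerivAt (fun s : ℝ => c * s ^ 2 / 2) (c * (2 * s) / 2) s := by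
      have := ((hasDerivAt_pow 2 s).const_mul c).div_const 2
      norm_num at this
      convert this using 1
    have := (hlog.add hlin).sub hsq
    exact this.congr_deriv (by ring)
  have hφmono : AntitoneOn
      (fun s => Real.log (q * Real.exp (-s) + (1 - q)) + q * s - c * s ^ 2 / 2)
      (Set.Ici 0) := by
    apply antitoneOn_of_deriv_nonpos (convex_Ici 0)
    · exact fun s _ => (hφd s).continuousAt.continuousWithinAt
    · exact fun s _ => (hφd s).differentiableAt.differentiableWithinAt
    · intro s hs
      rw [interior_Ici] at hs
      rw [(hφd s).deriv]
      exact hψle s (le_of_lt hs)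
  have hφt : Real.log (q * Real.exp (-t) + (1 - q)) + q * t - c * t ^ 2 / 2 ≤ 0 := by
    have := hφmono (self_mem_Ici) (mem_Ici.2 ht) ht
    simpa using this
  have hfin : q * Real.exp (t * (q - 1)) + (1 - q) * Real.exp (t * q)
      = Real.exp ((Real.log (q * Real.exp (-t) + (1 - q)) + q * t - c * t ^ 2 / 2)
          + c * t ^ 2 / 2) := by
    rw [show (Real.log (q * Real.exp (-t) + (1 - q)) + q * t - c * t ^ 2 / 2)
          + c * t ^ 2 / 2 = Real.log (q * Real.exp (-t) + (1 - q)) + q * t by ring]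
    rw [Real.exp_add, Real.exp_log (hD t)]
    rw [show t * (q - 1) = -t + t * q by ring, Real.exp_add]
    ring
  rw [hfin]
  apply Real.exp_le_exp.2
  linarith


/-- Lemma (b): for `n ≥ 1`, `λ ≥ 0`, `p ∈ [0,1]`, `q = (1-p)ⁿ`, and
`C₀ = inf_{0<x<1/2} 2/(x(1-x) log(1/x))`,
`q e^{λ(pq - p)} + (1-q) e^{λpq} ≤ exp(pλ²/(C₀ n))`. -/
theorem lamp_b (n : ℕ) (hn : 1 ≤ n) (lam p : ℝ) (hlam : 0 ≤ lam)
    (hp0 : 0 ≤ p) (hp1 : p ≤ 1) (C₀ : ℝ)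
    (hC₀ : C₀ = sInf ((fun x : ℝ => 2 / (x * (1 - x) * Real.log (1/x))) ''
      Set.Ioo (0:ℝ) (1/2))) :
    (1 - p)^n * Real.exp (lam * (p * (1 - p)^n - p))
      + (1 - (1 - p)^n) * Real.exp (lam * p * (1 - p)^n)
    ≤ Real.exp (p * lam^2 / (C₀ * n)) := by
  -- C₀ facts
  have hmem : ∀ x ∈ Set.Ioo (0:ℝ) (1/2), 2 ≤ 2 / (x * (1 - x) * Real.log (1/x)) := by
    rintro x ⟨hx0, hx2⟩
    have hlogpos : 0 < Real.log (1/x) := Real.log_pos (by rw [lt_div_iff₀ hx0]; linarith)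
    have hdpos : 0 < x * (1 - x) * Real.log (1/x) :=
      mul_pos (mul_pos hx0 (by linarith)) hlogpos
    have hle : Real.log (1/x) ≤ 1/x - 1 := Real.log_le_sub_one_of_pos (by positivity)
    have hd1 : x * (1 - x) * Real.log (1/x) ≤ 1 := by
      have h2 : x * (1 - x) * Real.log (1/x) ≤ x * (1 - x) * (1/x - 1) :=
        mul_le_mul_of_nonneg_left hle (by nlinarith)
      have h3 : x * (1 - x) * (1/x - 1) = (1 - x)^2 := by field_simp
      nlinarith
    rw [le_div_iff₀ hdpos]; linarith
  have hbdd : BddBelow ((fun x : ℝ => 2 / (x * (1 - x) * Real.log (1/x))) ''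
      Set.Ioo (0:ℝ) (1/2)) := ⟨2, by rintro b ⟨x, hx, rfl⟩; exact hmem x hx⟩
  have hC2 : 2 ≤ C₀ := by
    rw [hC₀]
    exact le_csInf ⟨_, ⟨1/4, by norm_num, rfl⟩⟩ (by rintro b ⟨x, hx, rfl⟩; exact hmem x hx)
  have hCle : ∀ x ∈ Set.Ioo (0:ℝ) (1/2), C₀ ≤ 2 / (x * (1 - x) * Real.log (1/x)) := by
    intro x hx; rw [hC₀]; exact csInf_le hbdd ⟨x, hx, rfl⟩
  have hC0pos : (0:ℝ) < C₀ := by linarith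
  have hnpos : (0:ℝ) < (n : ℝ) := by exact_mod_cast hn
  rcases eq_or_lt_of_le hp1 with hp1e | hp1'
  · -- p = 1
    subst hp1e
    have hz : ((1:ℝ) - 1)^n = 0 := by
      simp [zero_pow (by omega : n ≠ 0)]
    rw [hz]
    simp only [zero_mul, mul_zero, Real.exp_zero, mul_one, sub_zero, zero_add, one_mul]
    exact Real.one_le_exp (by positivity)
  · -- p < 1
    set q := (1 - p)^n with hqdef
    have hq0 : 0 ≤ q := pow_nonneg (by linarith) n
    have hq1 : q ≤ 1 := pow_le_one₀ (by linarith) (by linarith)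
    have hqpos : 0 < q := pow_pos (by linarith) n
    have hlog : (n : ℝ) * p ≤ Real.log (1/q) := by
      have h1 : Real.log (1 - p) ≤ -p := by
        have := Real.log_le_sub_one_of_pos (show (0:ℝ) < 1 - p by linarith)
        linarith
      have h2 : Real.log (1/q) = -((n : ℝ) * Real.log (1 - p)) := by
        rw [one_div, Real.log_inv, hqdef, Real.log_pow]
      rw [h2]
      have := mul_le_mul_of_nonneg_left h1 hnpos.le
      linarith
  -- goal reshaping helper
    have hgoal : ∀ c : ℝ, (∀ u : ℝ, 0 ≤ u → u ≤ q → u * (1 - u) ≤ c) →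
        c * (lam * p)^2 / 2 ≤ p * lam^2 / (C₀ * n) →
        (1 - p)^n * Real.exp (lam * (p * (1 - p)^n - p))
          + (1 - (1 - p)^n) * Real.exp (lam * p * (1 - p)^n)
          ≤ Real.exp (p * lam^2 / (C₀ * n)) := by
      intro c hc hce
      have hk := kearns_key q c hq0 hq1 hc (lam * p) (mul_nonneg hlam hp0)
      calc (1 - p)^n * Real.exp (lam * (p * (1 - p)^n - p))
            + (1 - (1 - p)^n) * Real.exp (lam * p * (1 - p)^n)
          = q * Real.exp ((lam * p) * (q - 1)) + (1 - q) * Real.exp ((lam * p) * q) := by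
            rw [← hqdef, show lam * (p * q - p) = (lam * p) * (q - 1) by ring,
              show lam * p * q = (lam * p) * q by ring]
        _ ≤ Real.exp (c * (lam * p)^2 / 2) := hk
        _ ≤ Real.exp (p * lam^2 / (C₀ * n)) := Real.exp_le_exp.2 hce
    by_cases hqh : q < 1/2
    · -- small q case: c = q(1-q)
      apply hgoal (q * (1 - q))
      · intro u hu0 huq
        nlinarith [mul_nonneg (sub_nonneg.2 huq) (show (0:ℝ) ≤ 1 - u - q by nlinarith)]
      · have hlogq : 0 < Real.log (1/q) := Real.log_pos (by rw [lt_div_iff₀ hqpos]; linarith)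
        have hd : 0 < q * (1 - q) * Real.log (1/q) :=
          mul_pos (mul_pos hqpos (by linarith)) hlogq
        have hC := hCle q ⟨hqpos, hqh⟩
        have hCd : C₀ * (q * (1 - q) * Real.log (1/q)) ≤ 2 := by
          rw [le_div_iff₀ hd] at hC; linarith
        have hkey : q * (1 - q) * p * C₀ * (n : ℝ) ≤ 2 := by
          nlinarith [mul_le_mul_of_nonneg_left hlog
            (mul_nonneg hC0pos.le (mul_nonneg hqpos.le (by linarith : (0:ℝ) ≤ 1 - q)))]
        rw [div_le_div_iff₀ (by norm_num) (by positivity)]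
        nlinarith [mul_le_mul_of_nonneg_left hkey (mul_nonneg (sq_nonneg lam) hp0)]
    · -- large q case: c = 1/4
      push_neg at hqh
      apply hgoal (1/4)
      · intro u hu0 huq
        nlinarith [sq_nonneg (1 - 2*u)]
      · have hlog2pos : (0:ℝ) < Real.log 2 := Real.log_pos (by norm_num)
        have hlogq2 : Real.log (1/q) ≤ Real.log 2 := by
          apply Real.log_le_log (by positivity)
          rw [div_le_iff₀ hqpos]; linarith
        have hnp : (n : ℝ) * p ≤ Real.log 2 := hlog.trans hlogq2
        have hlog4 : Real.log (1/(1/4 : ℝ)) = 2 * Real.log 2 := by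
          norm_num
          rw [show (4:ℝ) = 2^2 by norm_num, Real.log_pow]
          push_cast; ring
        have hC4 := hCle (1/4) ⟨by norm_num, by norm_num⟩
        rw [hlog4] at hC4
        have hC4' : C₀ ≤ 16 / (3 * Real.log 2) := by
          have : (1/4 : ℝ) * (1 - 1/4) * (2 * Real.log 2) = (3/8) * Real.log 2 := by ring
          rw [this] at hC4
          calc C₀ ≤ 2 / ((3/8) * Real.log 2) := hC4
            _ = 16 / (3 * Real.log 2) := by rw [div_eq_div_iff (by positivity) (by positivity)]; ring
        have hkey : C₀ * ((n : ℝ) * p) ≤ 16/3 := by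
          have h1 : C₀ * ((n : ℝ) * p) ≤ (16 / (3 * Real.log 2)) * Real.log 2 :=
            mul_le_mul hC4' hnp (mul_nonneg hnpos.le hp0) (by positivity)
          have h2 : (16 / (3 * Real.log 2)) * Real.log 2 = 16/3 := by
            field_simp
          linarith
        rw [div_le_div_iff₀ (by norm_num) (by positivity)]
        have hfact := mul_le_mul_of_nonneg_left hkey
          (mul_nonneg (mul_nonneg (sq_nonneg lam) hp0) (by norm_num : (0:ℝ) ≤ 1/4))
        calc 1/4 * (lam * p)^2 * (C₀ * (n:ℝ))
            = lam^2 * p * (1/4) * (C₀ * ((n:ℝ) * p)) := by ring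
          _ ≤ lam^2 * p * (1/4) * (16/3) := hfact
          _ ≤ p * lam^2 * 2 := by nlinarith [mul_nonneg (sq_nonneg lam) hp0]
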